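/- Let G = (V, E) be a finite multigraph with interaction φ : E → ℝ, and let θ ∈ ℝ. Place a qubit ℂ² at each vertex, and for each edge ε = {u,v} let X_u X_v denote the tensor product of the Pauli X operator on qubits u and v with the identity elsewhere on (ℂ²)^{⊗V}. Then ⟨0^{|V|}| Π_{ε={u,v}∈E} exp(−iθ φ(ε) X_u X_v) |0^{|V|}⟩ = 2^{−|V|} Σ_{σ ∈ {−1,+1}^V} Π_{{u,v}∈E} e^{−iθ φ({u,v}) σ_u σ_v} = Z_Ising(G; iθ). (All the operators X_u X_v commute, so the order of the product is immaterial.) -/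

import Mathlib

open scoped Classical Matrix

namespace Stmt11

variable {V Eg : Type*}

/-- The spin `±1` associated to a Boolean configuration value. -/
def spin (b : Bool) : ℝ := if b then 1 else -1

/-- The product `σ_u σ_v` of the spins at the two endpoints of an (unordered) edge. -/
def spinProd (σ : V → Bool) : Sym2 V → ℝ :=
  Sym2.lift ⟨fun u v => spin (σ u) * spin (σ v), fun _ _ => mul_comm _ _⟩

/-- The normalized Ising partition function
`Z_Ising(G;β) = 2^{−|V|} Σ_{σ ∈ {−1,+1}^V} Π_{ε={u,v} ∈ E} e^{−β φ(ε) σ_u σ_v}`. -/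
noncomputable def Zising [Fintype V] [Fintype Eg]
    (ends : Eg → Sym2 V) (φ : Eg → ℝ) (β : ℂ) : ℂ :=
  (2 : ℂ) ^ (-(Fintype.card V : ℤ)) *
    ∑ σ : V → Bool, ∏ e : Eg, Complex.exp (-β * (φ e : ℂ) * (spinProd σ (ends e) : ℝ))

/-- The operator `X_u X_v` on `(ℂ²)^{⊗V}`: the tensor product of the Pauli `X`
operator on the two (distinct) endpoints `u, v` of the edge with the identity
elsewhere.  Its matrix entry at `(x, y)` is `1` if `y` agrees with `x` off the edge
and differs from `x` at both endpoints, and `0` otherwise. -/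
noncomputable def pauliXX (e : Sym2 V) : Matrix (V → Bool) (V → Bool) ℂ :=
  fun x y => if (∀ w, w ∉ e → x w = y w) ∧ (∀ w ∈ e, x w ≠ y w) then 1 else 0

/-- The ordered product of matrices over a finite (linearly ordered) edge set. -/
noncomputable def oprod [LinearOrder Eg] {n : Type*} [Fintype n] [DecidableEq n]
    (S : Finset Eg) (f : Eg → Matrix n n ℂ) : Matrix n n ℂ :=
  ((S.sort (· ≤ ·)).map f).prod

/-! ### Auxiliary development: the Hadamard-like transform `W` -/

/-- complex spin -/
noncomputable def spinC (b : Bool) : ℂ := if b then 1 else -1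

/-- `(-1)^{a·b}` -/
noncomputable def fc (a b : Bool) : ℂ := if a ∧ b then -1 else 1

/-- The unnormalized Hadamard transform on `(ℂ²)^{⊗V}`. -/
noncomputable def Wmat [Fintype V] : Matrix (V → Bool) (V → Bool) ℂ :=
  fun x y => ∏ v, fc (x v) (y v)

lemma sum_pi_bool [Fintype V] (g : V → Bool → ℂ) :
    ∑ σ : V → Bool, ∏ v, g v (σ v) = ∏ v, ∑ b, g v b := by
  rw [Finset.prod_univ_sum]
  rw [← Fintype.piFinset_univ]

lemma hA (a c : Bool) : (∑ b, fc a b * fc b c) = if a = c then 2 else 0 := by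
  cases a <;> cases c <;> simp [Fintype.sum_bool, fc] <;> norm_num

lemma hB (a c : Bool) : (∑ b, fc a b * fc b c * spinC b) = if a = c then 0 else -2 := by
  cases a <;> cases c <;> simp [Fintype.sum_bool, fc, spinC] <;> norm_num

lemma WW [Fintype V] :
    (Wmat : Matrix (V → Bool) (V → Bool) ℂ) * Wmat
      = ((2 : ℂ) ^ Fintype.card V) • 1 := by
  ext x z
  rw [Matrix.mul_apply]
  simp only [Wmat]
  have : ∀ y : V → Bool, (∏ v, fc (x v) (y v)) * ∏ v, fc (y v) (z v)
      = ∏ v, (fc (x v) (y v) * fc (y v) (z v)) := fun y => (Finset.prod_mul_distrib).symm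
  simp only [this]
  rw [sum_pi_bool (fun v b => fc (x v) b * fc b (z v))]
  simp only [hA]
  by_cases hxz : x = z
  · subst hxz
    simp only [if_pos rfl, Finset.prod_const, Finset.card_univ, Matrix.smul_apply,
      Matrix.one_apply_eq, smul_eq_mul, mul_one]
    simp
  · obtain ⟨v, hv⟩ : ∃ v, x v ≠ z v := by
      by_contra h; push_neg at h; exact hxz (funext h)
    rw [Finset.prod_eq_zero (Finset.mem_univ v) (by simp [hv])]
    simp [Matrix.one_apply, Matrix.smul_apply, hxz]

lemma two_pow_ne : ((2 : ℂ) ^ (n : ℕ)) ≠ 0 := pow_ne_zero _ two_ne_zero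

/-- `W` as a unit. -/
noncomputable def Wunit (V : Type*) [Fintype V] : (Matrix (V → Bool) (V → Bool) ℂ)ˣ where
  val := Wmat
  inv := ((2 : ℂ) ^ Fintype.card V)⁻¹ • Wmat
  val_inv := by
    rw [Matrix.mul_smul, WW, smul_smul, inv_mul_cancel₀ two_pow_ne, one_smul]
  inv_val := by
    rw [Matrix.smul_mul, WW, smul_smul, inv_mul_cancel₀ two_pow_ne, one_smul]

lemma spinProd_mk (σ : V → Bool) (u w : V) :
    spinProd σ (s(u, w)) = spin (σ u) * spin (σ w) := rfl

lemma spin_cast (b : Bool) : ((spin b : ℝ) : ℂ) = spinC b := by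
  cases b <;> simp [spin, spinC]

/-- The key diagonalization. -/
lemma WDW [Fintype V] (e : Sym2 V) (he : ¬ e.IsDiag) :
    (Wmat : Matrix (V → Bool) (V → Bool) ℂ)
        * Matrix.diagonal (fun σ => ((spinProd σ e : ℝ) : ℂ)) * Wmat
      = ((2 : ℂ) ^ Fintype.card V) • pauliXX e := by
  induction e with
  | _ u w =>
  have huw : u ≠ w := by simpa using he
  ext x z
  rw [Matrix.mul_assoc, Matrix.mul_apply]
  simp only [Matrix.diagonal_mul, Wmat, spinProd_mk, Pi.smul_apply, smul_eq_mul]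
  have key : ∀ y : V → Bool,
      (∏ v, fc (x v) (y v)) * (((spin (y u) * spin (y w) : ℝ) : ℂ) * ∏ v, fc (y v) (z v))
        = ∏ v, (fc (x v) (y v) * fc (y v) (z v)
            * ((if v = u then spinC (y v) else 1) * (if v = w then spinC (y v) else 1))) := by
    intro y
    rw [Finset.prod_mul_distrib, Finset.prod_mul_distrib, Finset.prod_mul_distrib,
      Finset.prod_ite_eq' Finset.univ u (fun v => spinC (y v)),
      Finset.prod_ite_eq' Finset.univ w (fun v => spinC (y v))]
    push_cast [spin_cast]
    simp only [Finset.mem_univ, if_true]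
    ring
  simp only [key]
  rw [sum_pi_bool (fun v b => fc (x v) b * fc b (z v)
      * ((if v = u then spinC b else 1) * (if v = w then spinC b else 1)))]
  have hsum : ∀ v, (∑ b, fc (x v) b * fc b (z v)
      * ((if v = u then spinC b else 1) * (if v = w then spinC b else 1)))
      = if v = u ∨ v = w then (if x v = z v then 0 else -2)
        else (if x v = z v then 2 else 0) := by
    intro v
    rcases eq_or_ne v u with rfl | hvu
    · have hvw : v ≠ w := huw
      rw [if_pos (Or.inl rfl), ← hB (x v) (z v)]
      refine Finset.sum_congr rfl fun b _ => ?_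
      rw [if_pos rfl, if_neg hvw, mul_one]
    · rcases eq_or_ne v w with rfl | hvw
      · rw [if_pos (Or.inr rfl), ← hB (x v) (z v)]
        refine Finset.sum_congr rfl fun b _ => ?_
        rw [if_neg hvu, if_pos rfl, one_mul]
      · rw [if_neg (by tauto), ← hA (x v) (z v)]
        refine Finset.sum_congr rfl fun b _ => ?_
        rw [if_neg hvu, if_neg hvw, mul_one, mul_one]
  simp only [hsum]
  simp only [pauliXX, Matrix.smul_apply, smul_eq_mul]
  by_cases hc : (∀ v, v ∉ (s(u, w)) → x v = z v) ∧ (∀ v ∈ (s(u, w)), x v ≠ z v)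
  · rw [if_pos hc]
    obtain ⟨hoff, hon⟩ := hc
    have hval : ∀ v, (if v = u ∨ v = w then (if x v = z v then (0:ℂ) else -2)
        else (if x v = z v then 2 else 0))
        = 2 * ((if v = u then -1 else 1) * (if v = w then -1 else 1)) := by
      intro v
      rcases eq_or_ne v u with rfl | hvu
      · have h1 : x v ≠ z v := hon v (by simp [Sym2.mem_iff])
        have : v ≠ w := huw
        simp [h1, this]
      · rcases eq_or_ne v w with rfl | hvw
        · have h1 : x v ≠ z v := hon v (by simp [Sym2.mem_iff])
          simp [h1, hvu]
        · have h1 : x v = z v := hoff v (by simp [Sym2.mem_iff, hvu, hvw])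
          simp [h1, hvu, hvw]
    simp only [hval]
    rw [Finset.prod_mul_distrib, Finset.prod_mul_distrib,
      Finset.prod_ite_eq' Finset.univ u (fun _ => (-1 : ℂ)),
      Finset.prod_ite_eq' Finset.univ w (fun _ => (-1 : ℂ))]
    simp only [Finset.mem_univ, if_true, Finset.prod_const, Finset.card_univ]
    norm_num
  · rw [if_neg hc]
    push_neg at hc
    simp only [mul_zero]
    rcases Classical.em (∀ v, v ∉ (s(u, w)) → x v = z v) with hoff | hoff
    · obtain ⟨v, hv, hxz⟩ := hc hoff
      have hv' : v = u ∨ v = w := by simpa [Sym2.mem_iff] using hv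
      exact Finset.prod_eq_zero (Finset.mem_univ v) (by simp [hv', hxz])
    · push_neg at hoff
      obtain ⟨v, hv, hxz⟩ := hoff
      have hv' : ¬ (v = u ∨ v = w) := by simpa [Sym2.mem_iff] using hv
      exact Finset.prod_eq_zero (Finset.mem_univ v) (by simp [hv', hxz])

/-- the exponential, conjugated. -/
lemma exp_pauli [Fintype V] (e : Sym2 V) (he : ¬ e.IsDiag) (c : ℂ) :
    NormedSpace.exp (c • pauliXX e)
      = (Wunit V : Matrix (V → Bool) (V → Bool) ℂ)
          * Matrix.diagonal (fun σ => Complex.exp (c * ((spinProd σ e : ℝ) : ℂ)))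
          * ((Wunit V)⁻¹ : (Matrix (V → Bool) (V → Bool) ℂ)ˣ) := by
  have h1 : c • pauliXX e
      = (Wunit V : Matrix (V → Bool) (V → Bool) ℂ)
          * Matrix.diagonal (fun σ => c * ((spinProd σ e : ℝ) : ℂ))
          * ((Wunit V)⁻¹ : (Matrix (V → Bool) (V → Bool) ℂ)ˣ) := by
    have hinv : (((Wunit V)⁻¹ : (Matrix (V → Bool) (V → Bool) ℂ)ˣ) : Matrix (V → Bool) (V → Bool) ℂ)
        = ((2 : ℂ) ^ Fintype.card V)⁻¹ • Wmat := rfl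
    rw [hinv]
    show c • pauliXX e = Wmat * _ * _
    have hD : Matrix.diagonal (fun σ => c * ((spinProd σ e : ℝ) : ℂ))
        = c • Matrix.diagonal (fun σ => ((spinProd σ e : ℝ) : ℂ)) := by
      rw [← Matrix.diagonal_smul]; rfl
    rw [Matrix.mul_smul, hD, Matrix.mul_smul, Matrix.smul_mul, WDW e he,
      smul_smul, smul_smul]
    congr 1
    rw [mul_comm ((2:ℂ) ^ Fintype.card V)⁻¹ c, mul_assoc,
      inv_mul_cancel₀ two_pow_ne, mul_one]
  rw [h1, Matrix.exp_units_conj, Matrix.exp_diagonal]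
  congr 2
  funext σ
  rw [Pi.exp_def, ← Complex.exp_eq_exp_ℂ]

lemma prod_conj_diag [Fintype V] (l : List Eg) (g : Eg → (V → Bool) → ℂ) :
    (l.map (fun e => (Wunit V : Matrix (V → Bool) (V → Bool) ℂ)
        * Matrix.diagonal (g e) * (((Wunit V)⁻¹ : (Matrix (V → Bool) (V → Bool) ℂ)ˣ) : Matrix (V → Bool) (V → Bool) ℂ))).prod
      = (Wunit V : Matrix (V → Bool) (V → Bool) ℂ)
          * Matrix.diagonal (fun σ => (l.map (fun e => g e σ)).prod)
          * ((Wunit V)⁻¹ : (Matrix (V → Bool) (V → Bool) ℂ)ˣ) := by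
  induction l with
  | nil =>
      simp only [List.map_nil, List.prod_nil]
      rw [show Matrix.diagonal (fun _ : V → Bool => (1:ℂ)) = 1 from Matrix.diagonal_one]
      rw [Matrix.mul_one]
      exact (Units.mul_inv _).symm
  | cons a l ih =>
      simp only [List.map_cons, List.prod_cons, ih, ← Matrix.diagonal_mul_diagonal]
      simp only [Matrix.mul_assoc]
      congr 1
      congr 1
      rw [← Matrix.mul_assoc, Units.inv_mul, Matrix.one_mul]

lemma list_prod_map_univ [LinearOrder Eg] [Fintype Eg] (f : Eg → ℂ) :
    (((Finset.univ : Finset Eg).sort (· ≤ ·)).map f).prod = ∏ e : Eg, f e := by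
  have h1 : (((Finset.univ : Finset Eg).sort (· ≤ ·)).map f).prod
      = (Multiset.map f (((Finset.univ : Finset Eg).sort (· ≤ ·)) : Multiset Eg)).prod := by
    rw [Multiset.map_coe, Multiset.prod_coe]
  rw [h1, Finset.sort_eq, Finset.prod_eq_multiset_prod]

/-- **Reduction used in Theorem 6 of the paper.**
`⟨0^{|V|}| Π_{ε={u,v}∈E} exp(−iθ φ(ε) X_u X_v) |0^{|V|}⟩ = Z_Ising(G; iθ)`
(the operators `X_u X_v` pairwise commute, so the order of the product is
immaterial). -/
theorem amplitude_eq_ising [Fintype V] [LinearOrder Eg] [Fintype Eg]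
    (ends : Eg → Sym2 V) (hloop : ∀ e : Eg, ¬ (ends e).IsDiag)
    (φ : Eg → ℝ) (θ : ℝ) :
    (oprod Finset.univ (fun e =>
        NormedSpace.exp ((-(Complex.I * (θ : ℂ) * (φ e : ℂ))) • pauliXX (ends e))))
        (fun _ => false) (fun _ => false) =
      Zising ends φ (Complex.I * θ) := by
  rw [oprod]
  have hmap : ∀ e : Eg, NormedSpace.exp ((-(Complex.I * (θ : ℂ) * (φ e : ℂ))) • pauliXX (ends e))
      = (Wunit V : Matrix (V → Bool) (V → Bool) ℂ)
          * Matrix.diagonal (fun σ => Complex.exp ((-(Complex.I * (θ : ℂ) * (φ e : ℂ))) * ((spinProd σ (ends e) : ℝ) : ℂ)))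
          * ((Wunit V)⁻¹ : (Matrix (V → Bool) (V → Bool) ℂ)ˣ) :=
    fun e => exp_pauli (ends e) (hloop e) _
  simp only [hmap]
  rw [prod_conj_diag]
  -- now compute the (0,0) entry
  set b0 : V → Bool := fun _ => false with hb0
  have hW0 : ∀ σ : V → Bool, Wmat b0 σ = 1 := by
    intro σ; simp [Wmat, fc, hb0]
  have hW0' : ∀ σ : V → Bool, Wmat σ b0 = 1 := by
    intro σ; simp [Wmat, fc, hb0]
  have hinv : (((Wunit V)⁻¹ : (Matrix (V → Bool) (V → Bool) ℂ)ˣ) : Matrix (V → Bool) (V → Bool) ℂ)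
      = ((2 : ℂ) ^ Fintype.card V)⁻¹ • Wmat := rfl
  rw [hinv]
  show ((Wmat * _ * _) : Matrix (V → Bool) (V → Bool) ℂ) b0 b0 = _
  rw [Matrix.mul_assoc, Matrix.mul_apply]
  simp only [Matrix.diagonal_mul, Matrix.smul_apply, hW0, hW0', one_mul, smul_eq_mul, mul_one]
  rw [Zising]
  rw [← Finset.sum_mul, mul_comm]
  congr 1
  · rw [zpow_neg, zpow_natCast]
  · apply Finset.sum_congr rfl
    intro σ _
    rw [list_prod_map_univ (fun e => Complex.exp ((-(Complex.I * (θ : ℂ) * (φ e : ℂ))) * ((spinProd σ (ends e) : ℝ) : ℂ)))]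
    apply Finset.prod_congr rfl
    intro e _
    congr 1
    ring

end Stmt11
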